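/- arXiv:2510.00849 — 4 statements merged into one kernel-verified Lean document; each statement's English description precedes it below -/
import Mathlib

section
/- With V, g, P, π, ω, Ric, the Ricci tensors Ricθ, the scalar curvatures rθ, and the Einstein type tensors Eθ = Ricθ − (rθ/n)·g and E = Ric − (r/n)·g as in the pointwise model, the following identities of bilinear forms hold: E⁰ = E + ((n−1)/(4n))·π(P)·g − ((n−1)/4)·(π⊗π); E¹ = E² = E³ = E; E⁴ = E + ((n−1)/n)·π(P)·g − (n−1)·(π⊗π); E⁵ = E + ((n−1)/(2n))·π(P)·g − ((n−1)/2)·(π⊗π). -/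
/-- The `g`-trace of a bilinear form `B`: the trace of the endomorphism
`(g♭)⁻¹ ∘ B♭` of `V`, where `B♭ : V → V*` is `X ↦ B(X,·)`. -/
noncomputable def trG {V : Type*} [AddCommGroup V] [Module ℝ V] [FiniteDimensional ℝ V]
    (g : LinearMap.BilinForm ℝ V) (hg : g.Nondegenerate)
    (B : LinearMap.BilinForm ℝ V) : ℝ :=
  LinearMap.trace ℝ V ((g.toDual hg).symm.toLinearMap ∘ₗ B)

section aux
variable {V : Type*} [AddCommGroup V] [Module ℝ V] [FiniteDimensional ℝ V]
  (g : LinearMap.BilinForm ℝ V) (hg : g.Nondegenerate)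

lemma trG_sub (A B : LinearMap.BilinForm ℝ V) :
    trG g hg (A - B) = trG g hg A - trG g hg B := by
  unfold trG
  rw [LinearMap.comp_sub, map_sub]

lemma trG_smul (c : ℝ) (B : LinearMap.BilinForm ℝ V) :
    trG g hg (c • B) = c * trG g hg B := by
  unfold trG
  rw [LinearMap.comp_smul, map_smul, smul_eq_mul]

lemma trG_self : trG g hg g = (Module.finrank ℝ V : ℝ) := by
  unfold trG
  have : (g.toDual hg).symm.toLinearMap ∘ₗ g = LinearMap.id := by
    ext x
    have : (g.toDual hg) x = g x := rfl
    simp [← this]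
  rw [this, LinearMap.trace_id]

lemma trG_pipi (hgs : g.IsSymm) (P : V) (π : V →ₗ[ℝ] ℝ) (hπ : π = g.flip P) :
    trG g hg (π.smulRight π) = π P := by
  have hPd : (g.toDual hg) P = π := by
    ext x
    rw [hπ]
    exact hgs.eq P x
  have hcomp : (g.toDual hg).symm.toLinearMap ∘ₗ (π.smulRight π) = π.smulRight P := by
    ext x
    simp only [LinearMap.comp_apply, LinearMap.smulRight_apply, LinearEquiv.coe_coe, map_smul]
    rw [← hPd, LinearEquiv.symm_apply_apply]
  unfold trG
  rw [hcomp]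
  have := LinearMap.trace_eq_contract_apply ℝ V (π ⊗ₜ[ℝ] P)
  rw [show dualTensorHom ℝ V V (π ⊗ₜ[ℝ] P) = π.smulRight P from by ext x; simp] at this
  rw [this, contractLeft_apply]
end aux

theorem stmt_1 {V : Type*} [AddCommGroup V] [Module ℝ V] [FiniteDimensional ℝ V]
    (n : ℕ) (hn : 3 ≤ n) (hdim : Module.finrank ℝ V = n)
    (g : LinearMap.BilinForm ℝ V) (hg : g.Nondegenerate) (hgs : g.IsSymm)
    (P : V) (π : V →ₗ[ℝ] ℝ) (hπ : π = g.flip P) (ω : ℝ)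
    (ππ : LinearMap.BilinForm ℝ V) (hππ : ππ = π.smulRight π)
    (Ric : LinearMap.BilinForm ℝ V) (hRicSymm : Ric.IsSymm)
    (Ric0 Ric1 Ric2 Ric3 Ric4 Ric5 : LinearMap.BilinForm ℝ V)
    (hRic0 : Ric0 = Ric - ((((n : ℝ) - 1) / 2) * (3 * ω + π P)) • g - (((n : ℝ) - 1) / 4) • ππ)
    (hRic1 : Ric1 = Ric - (((n : ℝ) - 1) * (2 * ω + π P)) • g)
    (hRic2 : Ric2 = Ric - (((n : ℝ) - 1) * ω) • g)
    (hRic3 : Ric3 = Ric - (((n : ℝ) - 1) * ω) • g)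
    (hRic4 : Ric4 = Ric - (((n : ℝ) - 1) * ω) • g - ((n : ℝ) - 1) • ππ)
    (hRic5 : Ric5 = Ric - ((((n : ℝ) - 1) / 2) * (3 * ω + π P)) • g - (((n : ℝ) - 1) / 2) • ππ)
    (E E0 E1 E2 E3 E4 E5 : LinearMap.BilinForm ℝ V)
    (hE : E = Ric - (trG g hg Ric / (n : ℝ)) • g)
    (hE0 : E0 = Ric0 - (trG g hg Ric0 / (n : ℝ)) • g)
    (hE1 : E1 = Ric1 - (trG g hg Ric1 / (n : ℝ)) • g)
    (hE2 : E2 = Ric2 - (trG g hg Ric2 / (n : ℝ)) • g)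
    (hE3 : E3 = Ric3 - (trG g hg Ric3 / (n : ℝ)) • g)
    (hE4 : E4 = Ric4 - (trG g hg Ric4 / (n : ℝ)) • g)
    (hE5 : E5 = Ric5 - (trG g hg Ric5 / (n : ℝ)) • g) :
    E0 = E + ((((n : ℝ) - 1) / (4 * (n : ℝ))) * π P) • g - (((n : ℝ) - 1) / 4) • ππ ∧
    E1 = E ∧ E2 = E ∧ E3 = E ∧
    E4 = E + ((((n : ℝ) - 1) / (n : ℝ)) * π P) • g - ((n : ℝ) - 1) • ππ ∧
    E5 = E + ((((n : ℝ) - 1) / (2 * (n : ℝ))) * π P) • g - (((n : ℝ) - 1) / 2) • ππ := by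
  have hN : (n : ℝ) ≠ 0 := by
    have : 0 < n := by omega
    exact_mod_cast this.ne'
  have hgt : trG g hg g = (n : ℝ) := by rw [trG_self, hdim]
  have hpt : trG g hg ππ = π P := by rw [hππ]; exact trG_pipi g hg hgs P π hπ
  subst hππ hE hE0 hE1 hE2 hE3 hE4 hE5 hRic0 hRic1 hRic2 hRic3 hRic4 hRic5
  refine ⟨?_, ?_, ?_, ?_, ?_, ?_⟩ <;>
  · simp only [trG_sub, trG_smul, hgt, hpt]
    match_scalars <;> field_simp <;> ring
end

section
/- In the GRW specialization of the pointwise model with g(P,P) = −1, ω = 1, and Ric(P,X) = (n−1)·π(X) for all X ∈ V, the Ricci tensors of the semi-symmetric metric P-connection satisfy 4·Ric⁰(P,X) = Ric⁴(P,X) = 2·Ric⁵(P,X) = (n−1)·π(X) for all X ∈ V; in particular (n−1)/4, n−1 and (n−1)/2 are eigenvalues of Ric⁰, Ric⁴ and Ric⁵ respectively, corresponding to the eigenvector P. -/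
theorem stmt_8 {V : Type*} [AddCommGroup V] [Module ℝ V] [FiniteDimensional ℝ V]
    (n : ℕ) (hn : 3 ≤ n) (hdim : Module.finrank ℝ V = n)
    (g : LinearMap.BilinForm ℝ V) (hg : g.Nondegenerate) (hgs : g.IsSymm)
    (P : V) (hP : g P P = -1) (π : V →ₗ[ℝ] ℝ) (hπ : π = g.flip P)
    (ω : ℝ) (hω : ω = 1)
    (ππ : LinearMap.BilinForm ℝ V) (hππ : ππ = π.smulRight π)
    (Ric : LinearMap.BilinForm ℝ V) (hRicSymm : Ric.IsSymm)
    (hRicP : ∀ X : V, Ric P X = ((n : ℝ) - 1) * π X)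
    (Ric0 Ric4 Ric5 : LinearMap.BilinForm ℝ V)
    (hRic0 : Ric0 = Ric - ((((n : ℝ) - 1) / 2) * (3 * ω + π P)) • g - (((n : ℝ) - 1) / 4) • ππ)
    (hRic4 : Ric4 = Ric - (((n : ℝ) - 1) * ω) • g - ((n : ℝ) - 1) • ππ)
    (hRic5 : Ric5 = Ric - ((((n : ℝ) - 1) / 2) * (3 * ω + π P)) • g - (((n : ℝ) - 1) / 2) • ππ) :
    (∀ X : V, 4 * Ric0 P X = ((n : ℝ) - 1) * π X ∧
              Ric4 P X = ((n : ℝ) - 1) * π X ∧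
              2 * Ric5 P X = ((n : ℝ) - 1) * π X) ∧
    (∀ X : V, Ric0 P X = (((n : ℝ) - 1) / 4) * g P X ∧
              Ric4 P X = ((n : ℝ) - 1) * g P X ∧
              Ric5 P X = (((n : ℝ) - 1) / 2) * g P X) := by
  have hπP : π P = -1 := by rw [hπ]; simpa using hP
  have hgPX : ∀ X, g P X = π X := fun X => by
    rw [hπ]; simpa using (hgs.eq P X)
  have key : ∀ X, Ric0 P X = (((n:ℝ)-1)/4) * π X ∧ Ric4 P X = ((n:ℝ)-1) * π X ∧
      Ric5 P X = (((n:ℝ)-1)/2) * π X := by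
    intro X
    simp only [hRic0, hRic4, hRic5, hππ, LinearMap.sub_apply, LinearMap.smul_apply,
      LinearMap.smulRight_apply, smul_eq_mul, hRicP, hπP, hω, hgPX]
    refine ⟨by ring, by ring, by ring⟩
  constructor
  · intro X
    obtain ⟨h0, h4, h5⟩ := key X
    exact ⟨by rw [h0]; ring, by rw [h4], by rw [h5]; ring⟩
  · intro X
    obtain ⟨h0, h4, h5⟩ := key X
    rw [hgPX]
    exact ⟨h0, h4, h5⟩
end

section
/- Let V be a real vector space of finite dimension n ≥ 3 with nondegenerate symmetric bilinear form g, let P ∈ V satisfy g(P,P) = −1, let π(X) = g(X,P), let Ric be a symmetric bilinear form on V with Ric(P,X) = (n−1)·π(X) for all X ∈ V, and let r = tr_g(Ric). If Ric = a·g + b·(π⊗π) for real scalars a and b, then Ric = (r/(n−1) − 1)·g + (r/(n−1) − n)·(π⊗π). -/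
theorem stmt_11 {V : Type*} [AddCommGroup V] [Module ℝ V] [FiniteDimensional ℝ V]
    (n : ℕ) (hn : 3 ≤ n) (hdim : Module.finrank ℝ V = n)
    (g : LinearMap.BilinForm ℝ V) (hg : g.Nondegenerate) (hgs : g.IsSymm)
    (P : V) (hP : g P P = -1) (π : V →ₗ[ℝ] ℝ) (hπ : π = g.flip P)
    (ππ : LinearMap.BilinForm ℝ V) (hππ : ππ = π.smulRight π)
    (Ric : LinearMap.BilinForm ℝ V) (hRicSymm : Ric.IsSymm)
    (hRicP : ∀ X : V, Ric P X = ((n : ℝ) - 1) * π X)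
    (a b : ℝ) (hqE : Ric = a • g + b • ππ) :
    Ric = (trG g hg Ric / ((n : ℝ) - 1) - 1) • g
      + (trG g hg Ric / ((n : ℝ) - 1) - (n : ℝ)) • ππ := by
  have hπP : π P = -1 := by rw [hπ]; simpa using hP
  -- toDual hg P = π
  have htP : (g.toDual hg) P = π := by
    ext X
    rw [hπ]
    simp only [LinearMap.BilinForm.toDual_def, LinearMap.flip_apply]
    exact hgs.eq P X
  have hsymmπ : (g.toDual hg).symm π = P := by
    rw [← htP, LinearEquiv.symm_apply_apply]
  -- trG of g is n
  have htrg : trG g hg g = (n : ℝ) := by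
    have : (g.toDual hg).symm.toLinearMap ∘ₗ g = LinearMap.id := by
      ext X
      have : (g.toDual hg) X = g X := by
        ext Y; simp [LinearMap.BilinForm.toDual_def]
      simp [← this, LinearEquiv.symm_apply_apply]
    rw [trG, this, LinearMap.trace_id, hdim]
  -- trG of ππ is -1
  have htrππ : trG g hg ππ = -1 := by
    have hc : (g.toDual hg).symm.toLinearMap ∘ₗ ππ
        = dualTensorHom ℝ V V (π ⊗ₜ[ℝ] P) := by
      ext X
      simp [hππ, hsymmπ, dualTensorHom_apply, map_smul]
    rw [trG, hc, LinearMap.trace_eq_contract_apply]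
    simp [hπP]
  -- trace of Ric
  have htr : trG g hg Ric = a * n - b := by
    rw [hqE]
    unfold trG
    rw [LinearMap.comp_add, map_add]
    have h1 : (g.toDual hg).symm.toLinearMap ∘ₗ (a • g)
        = a • ((g.toDual hg).symm.toLinearMap ∘ₗ g) := by
      ext X; simp
    have h2 : (g.toDual hg).symm.toLinearMap ∘ₗ (b • ππ)
        = b • ((g.toDual hg).symm.toLinearMap ∘ₗ ππ) := by
      ext X; simp
    rw [h1, h2, map_smul, map_smul]
    have e1 := htrg
    have e2 := htrππ
    unfold trG at e1 e2
    rw [e1, e2]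
    simp only [smul_eq_mul]; ring
  -- a - b = n - 1
  have hab : -a + b = -((n : ℝ) - 1) := by
    have h := hRicP P
    rw [hqE] at h
    simp only [LinearMap.add_apply, LinearMap.smul_apply, smul_eq_mul, hππ,
      LinearMap.smulRight_apply] at h
    rw [hP, hπP] at h
    linarith [h]
  have hn1 : (n : ℝ) - 1 ≠ 0 := by
    have : (3 : ℝ) ≤ (n : ℝ) := by exact_mod_cast hn
    linarith
  have ha : trG g hg Ric / ((n : ℝ) - 1) - 1 = a := by
    rw [htr]; field_simp; linarith
  have hb : trG g hg Ric / ((n : ℝ) - 1) - (n : ℝ) = b := by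
    rw [htr]; field_simp; linear_combination (-(n:ℝ)) * hab
  rw [ha, hb, hqE]
end

section
/- In the GRW specialization of the pointwise model with g(P,P) = −1, ω = 1, and Ric(P,X) = (n−1)·π(X) for all X ∈ V: the Einstein type condition of the fifth kind Ric⁵ = (r⁵/n)·g holds if and only if Ric = ((n−1)/2)·(3g + π⊗π); and in that case the scalar curvature is the constant 2r = (n−1)(3n−1). -/
theorem stmt_14 {V : Type*} [AddCommGroup V] [Module ℝ V] [FiniteDimensional ℝ V]
    (n : ℕ) (hn : 3 ≤ n) (hdim : Module.finrank ℝ V = n)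
    (g : LinearMap.BilinForm ℝ V) (hg : g.Nondegenerate) (hgs : g.IsSymm)
    (P : V) (hP : g P P = -1) (π : V →ₗ[ℝ] ℝ) (hπ : π = g.flip P)
    (ω : ℝ) (hω : ω = 1)
    (ππ : LinearMap.BilinForm ℝ V) (hππ : ππ = π.smulRight π)
    (Ric : LinearMap.BilinForm ℝ V) (hRicSymm : Ric.IsSymm)
    (hRicP : ∀ X : V, Ric P X = ((n : ℝ) - 1) * π X)
    (Ric5 : LinearMap.BilinForm ℝ V)
    (hRic5 : Ric5 = Ric - ((((n : ℝ) - 1) / 2) * (3 * ω + π P)) • g - (((n : ℝ) - 1) / 2) • ππ) :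
    (Ric5 = (trG g hg Ric5 / (n : ℝ)) • g ↔
      Ric = (((n : ℝ) - 1) / 2) • ((3 : ℝ) • g + ππ)) ∧
    (Ric5 = (trG g hg Ric5 / (n : ℝ)) • g →
      2 * trG g hg Ric = ((n : ℝ) - 1) * (3 * (n : ℝ) - 1)) := by
  have hn0 : (n : ℝ) ≠ 0 := by
    have : (0:ℝ) < n := by exact_mod_cast lt_of_lt_of_le (by norm_num) hn
    linarith
  set c : ℝ := ((n : ℝ) - 1) / 2 with hc
  have hπP : π P = -1 := by rw [hπ]; simpa using hP
  have hgP : g P = π := by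
    ext X
    rw [hπ]
    simpa using (hgs.eq P X)
  -- simplified Ric5
  have hC : Ric5 = Ric - (((n : ℝ) - 1)) • g - c • ππ := by
    have h1 : c * (3 * ω + π P) = (n : ℝ) - 1 := by rw [hω, hπP, hc]; ring
    rw [hRic5, h1]
  -- trG lemmas
  have hsmul : ∀ (a : ℝ) (B : LinearMap.BilinForm ℝ V),
      trG g hg (a • B) = a * trG g hg B := by
    intro a B
    unfold trG
    have h : (g.toDual hg).symm.toLinearMap ∘ₗ (a • B)
        = a • ((g.toDual hg).symm.toLinearMap ∘ₗ B) := by ext x; simp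
    rw [h, map_smul, smul_eq_mul]
  have hadd : ∀ (B C : LinearMap.BilinForm ℝ V),
      trG g hg (B + C) = trG g hg B + trG g hg C := by
    intro B C
    unfold trG
    have h : (g.toDual hg).symm.toLinearMap ∘ₗ (B + C)
        = ((g.toDual hg).symm.toLinearMap ∘ₗ B) + ((g.toDual hg).symm.toLinearMap ∘ₗ C) := by
      ext x; simp
    rw [h, map_add]
  have hEndg : (g.toDual hg).symm.toLinearMap ∘ₗ g = LinearMap.id := by
    ext x
    have : (g.toDual hg) x = g x := rfl
    simp [← this]
  have htrg : trG g hg g = (n : ℝ) := by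
    rw [trG, hEndg, LinearMap.trace_id, hdim]
  have hsymmπ : (g.toDual hg).symm π = P := by
    rw [← hgP]
    have : (g.toDual hg) P = g P := rfl
    rw [← this, LinearEquiv.symm_apply_apply]
  have htrππ : trG g hg ππ = -1 := by
    have hE : (g.toDual hg).symm.toLinearMap ∘ₗ ππ = dualTensorHom ℝ V V (π ⊗ₜ[ℝ] P) := by
      ext x
      simp [hππ, map_smul, hsymmπ, dualTensorHom_apply]
    rw [trG, hE, LinearMap.trace_eq_contract_apply, contractLeft_apply, hπP]
  -- main equivalence
  have fwd : Ric5 = (trG g hg Ric5 / (n : ℝ)) • g → Ric = c • ((3 : ℝ) • g + ππ) := by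
    intro hE
    set k : ℝ := trG g hg Ric5 / (n : ℝ) with hk
    have hππPP : ππ P P = 1 := by rw [hππ]; simp [hπP]
    have hRPP : Ric P P = -((n : ℝ) - 1) := by rw [hRicP P, hπP]; ring
    have h1 : Ric5 P P = -c := by
      rw [hC]
      simp only [LinearMap.sub_apply, LinearMap.smul_apply, smul_eq_mul]
      rw [hRPP, hP, hππPP]; ring
    have h2 : Ric5 P P = -k := by
      rw [hE]
      simp only [LinearMap.smul_apply, smul_eq_mul]
      rw [hP]; ring
    have hkc : k = c := by linarith [h1.symm.trans h2]
    have hR5 : Ric5 = c • g := by rw [hE, hkc]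
    have : Ric = Ric5 + (((n : ℝ) - 1)) • g + c • ππ := by rw [hC]; abel
    rw [this, hR5, smul_add, smul_smul, ← add_smul]
    congr 1
    · congr 1; rw [hc]; ring
  have bwd : Ric = c • ((3 : ℝ) • g + ππ) → Ric5 = (trG g hg Ric5 / (n : ℝ)) • g := by
    intro hR
    have hR5 : Ric5 = c • g := by
      rw [hC, hR, smul_add, smul_smul]
      have : (c * 3 - ((n:ℝ)-1)) = c := by rw [hc]; ring
      rw [← this]
      ext x y
      simp only [LinearMap.sub_apply, LinearMap.add_apply, LinearMap.smul_apply, smul_eq_mul]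
      ring
    have htr : trG g hg Ric5 = c * (n : ℝ) := by rw [hR5, hsmul, htrg]
    rw [htr, hR5]
    congr 1
    field_simp
  refine ⟨⟨fwd, bwd⟩, ?_⟩
  intro hE
  have hR := fwd hE
  have : trG g hg Ric = c * (3 * (n : ℝ) + (-1)) := by
    rw [hR, hsmul, hadd, hsmul, htrg, htrππ]
  rw [this, hc]; ring
end
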